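/- Under the PIGD setup, assume additionally that argmin F is nonempty, and let x̄^k denote the metric projection of x^k onto argmin F. Set δ_k := (1/γ_k − L/2)/2, ξ_k := F(x^k) + δ_k‖x^k − x^{k−1}‖² − min F, and ε_k := 4c δ_{k+1}²/((1−c)L) + 4c/((1−c)L γ_k²). Then for every k ≥ 0: (ξ_{k+1})² ≤ ε_k · (ξ_k − ξ_{k+1}) · (2‖x^{k+1} − x̄^{k+1}‖² + ‖x^{k+1} − x^k‖²). -/

import Mathlib

open RealInnerProductSpace

section pigd_helpers

variable {E : Type*} [NormedAddCommGroup E] [InnerProductSpace ℝ E]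

lemma pigd_prox_subgrad (g : E → ℝ) (hg : ConvexOn ℝ Set.univ g) (γ' : ℝ) (hγ : 0 < γ')
    (y m : E) (hmin : IsMinOn (fun z => ‖z - y‖ ^ 2 / (2 * γ') + g z) Set.univ m) (z : E) :
    g m + (1 / γ') * ⟪y - m, z - m⟫ ≤ g z := by
  set K : ℝ := ‖z - m‖ ^ 2 / (2 * γ') with hK
  have hK0 : 0 ≤ K := by positivity
  have key : ∀ t : ℝ, 0 < t → t ≤ 1 →
      g m ≤ g z + (1 / γ') * ⟪m - y, z - m⟫ + t * K := by
    intro t ht0 ht1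
    have hzt : m + t • (z - m) = (1 - t) • m + t • z := by
      rw [sub_smul, one_smul, smul_sub]; abel
    have hmem := hmin (Set.mem_univ (m + t • (z - m)))
    simp only [Set.mem_setOf_eq] at hmem
    have hgt : g (m + t • (z - m)) ≤ (1 - t) * g m + t * g z := by
      rw [hzt]
      exact hg.2 (Set.mem_univ m) (Set.mem_univ z) (by linarith) (le_of_lt ht0) (by ring)
    have hnorm : ‖m + t • (z - m) - y‖ ^ 2
        = ‖m - y‖ ^ 2 + 2 * t * ⟪m - y, z - m⟫ + t ^ 2 * ‖z - m‖ ^ 2 := by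
      have h : m + t • (z - m) - y = (m - y) + t • (z - m) := by abel
      rw [h, norm_add_sq_real, real_inner_smul_right, norm_smul]
      rw [Real.norm_eq_abs, abs_of_pos ht0, mul_pow]
      ring
    have hψ : ‖m - y‖ ^ 2 / (2 * γ') + g m ≤
        (‖m - y‖ ^ 2 + 2 * t * ⟪m - y, z - m⟫ + t ^ 2 * ‖z - m‖ ^ 2) / (2 * γ')
          + ((1 - t) * g m + t * g z) := by
      calc ‖m - y‖ ^ 2 / (2 * γ') + g m ≤ ‖m + t • (z - m) - y‖ ^ 2 / (2 * γ')
          + g (m + t • (z - m)) := hmem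
        _ ≤ _ := by rw [hnorm]; linarith
    have hexp : (‖m - y‖ ^ 2 + 2 * t * ⟪m - y, z - m⟫ + t ^ 2 * ‖z - m‖ ^ 2) / (2 * γ')
        = ‖m - y‖ ^ 2 / (2 * γ') + t * ((1 / γ') * ⟪m - y, z - m⟫) + t * (t * K) := by
      rw [hK]; field_simp
    rw [hexp] at hψ
    have h2 : t * g m ≤ t * (g z + (1 / γ') * ⟪m - y, z - m⟫ + t * K) := by nlinarith [hψ]
    exact le_of_mul_le_mul_left h2 ht0
  have hmain : g m ≤ g z + (1 / γ') * ⟪m - y, z - m⟫ := by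
    apply le_of_forall_pos_le_add
    intro ε hε
    have ht0 : (0:ℝ) < min 1 (ε / (K + 1)) := lt_min one_pos (by positivity)
    have h := key _ ht0 (min_le_left _ _)
    have htK : min 1 (ε / (K + 1)) * K ≤ ε := by
      calc min 1 (ε / (K + 1)) * K ≤ (ε / (K + 1)) * K := by
            apply mul_le_mul_of_nonneg_right (min_le_right _ _) hK0
        _ ≤ ε := by
            rw [div_mul_eq_mul_div, div_le_iff₀ (by linarith)]
            nlinarith
    linarith
  have hsign : ⟪y - m, z - m⟫ = -⟪m - y, z - m⟫ := by
    rw [show y - m = -(m - y) by abel, inner_neg_left]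
  rw [hsign]
  linarith

variable [CompleteSpace E]

/-- chain rule along a line -/
lemma pigd_line_hasDerivAt (f : E → ℝ) (f' : E → E) (hf' : ∀ x, HasGradientAt f (f' x) x)
    (u v : E) (t : ℝ) :
    HasDerivAt (fun s : ℝ => f (u + s • (v - u))) ⟪f' (u + t • (v - u)), v - u⟫ t := by
  have hline : HasDerivAt (fun s : ℝ => u + s • (v - u)) (v - u) t := by
    simpa using ((hasDerivAt_id t).smul_const (v - u)).const_add u
  have := (hf' (u + t • (v - u))).hasFDerivAt.comp_hasDerivAt t hline
  simp [InnerProductSpace.toDual_apply_apply] at this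
  exact this

/-- Descent lemma -/
lemma pigd_descent (f : E → ℝ) (f' : E → E) (L : ℝ) (hL : 0 < L)
    (hf' : ∀ x, HasGradientAt f (f' x) x)
    (hlip : ∀ x y, ‖f' x - f' y‖ ≤ L * ‖x - y‖) (u v : E) :
    f v ≤ f u + ⟪f' u, v - u⟫ + L / 2 * ‖v - u‖ ^ 2 := by
  set ψ : ℝ → ℝ := fun t => f (u + t • (v - u)) - t * ⟪f' u, v - u⟫ - L / 2 * t ^ 2 * ‖v - u‖ ^ 2
    with hψ
  have hd : ∀ t : ℝ, HasDerivAt ψ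
      (⟪f' (u + t • (v - u)), v - u⟫ - ⟪f' u, v - u⟫ - L * t * ‖v - u‖ ^ 2) t := by
    intro t
    have h1 := pigd_line_hasDerivAt f f' hf' u v t
    have h2 : HasDerivAt (fun s : ℝ => s * ⟪f' u, v - u⟫) ⟪f' u, v - u⟫ t := by
      simpa using (hasDerivAt_id t).mul_const ⟪f' u, v - u⟫
    have h3 : HasDerivAt (fun s : ℝ => L / 2 * s ^ 2 * ‖v - u‖ ^ 2)
        (L * t * ‖v - u‖ ^ 2) t := by
      have : HasDerivAt (fun s : ℝ => s ^ 2) (2 * t) t := by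
        simpa using hasDerivAt_pow 2 t
      have := (this.const_mul (L / 2)).mul_const (‖v - u‖ ^ 2)
      rw [show L * t * ‖v - u‖ ^ 2 = L / 2 * (2 * t) * ‖v - u‖ ^ 2 by ring]
      exact this
    exact (h1.sub h2).sub h3
  have hanti : AntitoneOn ψ (Set.Icc (0:ℝ) 1) := by
    apply antitoneOn_of_deriv_nonpos (convex_Icc 0 1)
    · exact fun t _ => ((hd t).continuousAt).continuousWithinAt
    · exact fun t _ => ((hd t).differentiableAt).differentiableWithinAt
    · intro t ht
      rw [interior_Icc] at ht
      rw [(hd t).deriv]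
      have hineq : ⟪f' (u + t • (v - u)) - f' u, v - u⟫ ≤ L * t * ‖v - u‖ ^ 2 := by
        calc ⟪f' (u + t • (v - u)) - f' u, v - u⟫ ≤ ‖f' (u + t • (v - u)) - f' u‖ * ‖v - u‖ :=
          real_inner_le_norm _ _
        _ ≤ (L * ‖(u + t • (v - u)) - u‖) * ‖v - u‖ := by
            gcongr; exact hlip _ _
        _ = L * t * ‖v - u‖ ^ 2 := by
            rw [add_sub_cancel_left, norm_smul]
            simp [abs_of_pos ht.1]
            ring
      rw [inner_sub_left] at hineq
      linarith
  have h01 := hanti (Set.left_mem_Icc.2 zero_le_one) (Set.right_mem_Icc.2 zero_le_one) zero_le_one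
  simp only [hψ, zero_smul, add_zero, one_smul, zero_mul, zero_pow, mul_zero, sub_zero,
    one_pow, mul_one, add_sub_cancel] at h01
  linarith

/-- Gradient inequality for convex functions -/
lemma pigd_grad_ineq (f : E → ℝ) (f' : E → E)
    (hfconv : ConvexOn ℝ Set.univ f)
    (hf' : ∀ x, HasGradientAt f (f' x) x) (u v : E) :
    f u + ⟪f' u, v - u⟫ ≤ f v := by
  rcases eq_or_ne v u with rfl | hvu
  · simp
  set φ : ℝ → ℝ := fun t => f (u + t • (v - u)) with hφ
  have hconv : ConvexOn ℝ Set.univ φ := by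
    have := hfconv.comp_affineMap (AffineMap.lineMap u v : ℝ →ᵃ[ℝ] E)
    have heq : ∀ t : ℝ, φ t = (f ∘ (AffineMap.lineMap u v : ℝ →ᵃ[ℝ] E)) t := by
      intro t
      simp [hφ, AffineMap.lineMap_apply, vsub_eq_sub, vadd_eq_add]
      congr 1
      abel
    have hs : (AffineMap.lineMap u v : ℝ →ᵃ[ℝ] E) ⁻¹' Set.univ = (Set.univ : Set ℝ) := by simp
    rw [hs] at this
    exact this.congr (fun t _ => (heq t).symm)
  have hder : HasDerivAt φ ⟪f' u, v - u⟫ 0 := by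
    have := pigd_line_hasDerivAt f f' hf' u v 0
    simp at this
    exact this
  have hslope := hconv.le_slope_of_hasDerivAt (Set.mem_univ 0) (Set.mem_univ 1) one_pos hder
  have h1 : φ 1 = f v := by simp [hφ]
  have h0 : φ 0 = f u := by simp [hφ]
  rw [slope_def_field] at hslope
  simp [h1, h0] at hslope
  linarith

/-- half cocoercivity -/
lemma pigd_half_coco (f : E → ℝ) (f' : E → E) (L : ℝ) (hL : 0 < L)
    (hfconv : ConvexOn ℝ Set.univ f)
    (hf' : ∀ x, HasGradientAt f (f' x) x)
    (hlip : ∀ x y, ‖f' x - f' y‖ ≤ L * ‖x - y‖) (u v : E) :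
    f u + ⟪f' u, v - u⟫ + 1 / (2 * L) * ‖f' v - f' u‖ ^ 2 ≤ f v := by
  set q := f' v - f' u with hq
  set w := v - (1 / L) • q with hw
  have h1 := pigd_descent f f' L hL hf' hlip v w
  have h2 := pigd_grad_ineq f f' hfconv hf' u w
  have e1 : w - v = -((1 / L) • q) := by rw [hw]; abel
  have e2 : w - u = (v - u) - (1 / L) • q := by rw [hw]; abel
  rw [e1] at h1
  rw [e2] at h2
  have i1 : ⟪f' v, -((1 / L) • q)⟫ = -(1 / L) * ⟪f' v, q⟫ := by
    rw [inner_neg_right, real_inner_smul_right]; ring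
  have i2 : ‖-((1 / L) • q)‖ ^ 2 = (1 / L) ^ 2 * ‖q‖ ^ 2 := by
    rw [norm_neg, norm_smul, mul_pow]
    congr 1
    rw [norm_div, Real.norm_eq_abs, Real.norm_eq_abs, abs_of_pos hL, abs_one]
  have i3 : ⟪f' u, v - u - (1 / L) • q⟫ = ⟪f' u, v - u⟫ - (1 / L) * ⟪f' u, q⟫ := by
    rw [inner_sub_right, real_inner_smul_right]
  have i4 : ⟪f' v, q⟫ - ⟪f' u, q⟫ = ‖q‖ ^ 2 := by
    rw [← inner_sub_left, ← hq, real_inner_self_eq_norm_sq]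
  rw [i1, i2] at h1
  rw [i3] at h2
  -- h2 : f u + (⟪f' u, v-u⟫ - (1/L)⟪f' u, q⟫) ≤ f w
  -- h1 : f w ≤ f v + (-(1/L) * ⟪f' v, q⟫) + L/2 * ((1/L)^2 * ‖q‖^2)
  have hL' : L ≠ 0 := ne_of_gt hL
  have : f u + ⟪f' u, v - u⟫ - (1 / L) * ⟪f' u, q⟫ + (1/L) * ⟪f' v, q⟫
      - L / 2 * ((1 / L) ^ 2 * ‖q‖ ^ 2) ≤ f v := by linarith
  have e5 : (1 / L) * ⟪f' v, q⟫ - (1 / L) * ⟪f' u, q⟫ = (1 / L) * ‖q‖ ^ 2 := by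
    rw [← mul_sub, i4]
  have e6 : L / 2 * ((1 / L) ^ 2 * ‖q‖ ^ 2) = 1 / (2 * L) * ‖q‖ ^ 2 := by
    field_simp
  have e7 : (1 / L) * ‖q‖ ^ 2 - 1 / (2 * L) * ‖q‖ ^ 2 = 1 / (2 * L) * ‖q‖ ^ 2 := by
    field_simp; ring
  linarith [this, e5, e6, e7]

lemma pigd_coco (f : E → ℝ) (f' : E → E) (L : ℝ) (hL : 0 < L)
    (hfconv : ConvexOn ℝ Set.univ f)
    (hf' : ∀ x, HasGradientAt f (f' x) x)
    (hlip : ∀ x y, ‖f' x - f' y‖ ≤ L * ‖x - y‖) (u v : E) :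
    1 / L * ‖f' v - f' u‖ ^ 2 ≤ ⟪f' v - f' u, v - u⟫ := by
  have h1 := pigd_half_coco f f' L hL hfconv hf' hlip u v
  have h2 := pigd_half_coco f f' L hL hfconv hf' hlip v u
  have e1 : ‖f' u - f' v‖ = ‖f' v - f' u‖ := norm_sub_rev _ _
  rw [e1] at h2
  have e2 : ⟪f' v, u - v⟫ = -⟪f' v, v - u⟫ := by
    rw [← inner_neg_right]; congr 1; abel
  rw [e2] at h2
  have e3 : ⟪f' v - f' u, v - u⟫ = ⟪f' v, v - u⟫ - ⟪f' u, v - u⟫ := inner_sub_left _ _ _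
  rw [e3]
  have : 1 / (2 * L) * ‖f' v - f' u‖ ^ 2 + 1 / (2 * L) * ‖f' v - f' u‖ ^ 2
      ≤ ⟪f' v, v - u⟫ - ⟪f' u, v - u⟫ := by linarith
  have e4 : 1 / (2 * L) * ‖f' v - f' u‖ ^ 2 + 1 / (2 * L) * ‖f' v - f' u‖ ^ 2
      = 1 / L * ‖f' v - f' u‖ ^ 2 := by field_simp; ring
  linarith [this, e4]

end pigd_helpers

lemma pigd_alg0 (e m' v : ℝ) (h : e * m' = v) (hm : 0 < m') (hv : 0 ≤ v) : 0 ≤ e := by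
  nlinarith
lemma pigd_alg1 (s e A P : ℝ) :
    (s * P + e * A ^ 2) ^ 2 ≤ (s ^ 2 / 2 + e ^ 2 * A ^ 2) * (2 * P ^ 2 + A ^ 2) := by
  nlinarith [sq_nonneg (s * A - 2 * e * A * P)]
lemma pigd_alg2 (A B b r e : ℝ) (hb0 : 0 ≤ b) (hb1 : b ≤ 1) (hB : 0 ≤ B) :
    (r * (A + b * B)) ^ 2 / 2 + e ^ 2 * A ^ 2 ≤ (e ^ 2 + r ^ 2) * (A ^ 2 + B ^ 2) := by
  have hb2 : (A + b * B) ^ 2 ≤ 2 * (A ^ 2 + B ^ 2) := by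
    nlinarith [sq_nonneg (A - b * B),
      mul_nonneg (mul_nonneg (by linarith : (0:ℝ) ≤ 1 - b) (by linarith : (0:ℝ) ≤ 1 + b))
        (sq_nonneg B)]
  nlinarith [mul_le_mul_of_nonneg_left hb2 (sq_nonneg r), sq_nonneg e, sq_nonneg B,
    mul_nonneg (sq_nonneg e) (sq_nonneg B)]



set_option maxHeartbeats 4000000 in
/-- Lemma 5, key inequality for the Lyapunov function of PIGD. Under the
PIGD setup, with `argmin F` nonempty, `x̄ᵏ` the projection of `xᵏ` onto `argmin F`,
`δₖ = (1/γₖ − L/2)/2`, `ξₖ = F(xᵏ) + δₖ‖xᵏ − xᵏ⁻¹‖² − min F`, and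
`εₖ = 4cδₖ₊₁²/((1−c)L) + 4c/((1−c)Lγₖ²)`, we have
`ξₖ₊₁² ≤ εₖ (ξₖ − ξₖ₊₁)(2‖xᵏ⁺¹ − x̄ᵏ⁺¹‖² + ‖xᵏ⁺¹ − xᵏ‖²)` for every `k ≥ 0`. -/
theorem pigd_stmt2
    {n : ℕ} (f g F : EuclideanSpace ℝ (Fin n) → ℝ)
    (f' : EuclideanSpace ℝ (Fin n) → EuclideanSpace ℝ (Fin n))
    (L c : ℝ) (hL : 0 < L) (hc0 : 0 < c) (hc1 : c < 1)
    (hfconv : ConvexOn ℝ Set.univ f)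
    (hgconv : ConvexOn ℝ Set.univ g)
    (hgcont : Continuous g)
    (hf' : ∀ x, HasGradientAt f (f' x) x)
    (hlip : ∀ x y, ‖f' x - f' y‖ ≤ L * ‖x - y‖)
    (hF : ∀ x, F x = f x + g x)
    (hFbdd : BddBelow (Set.range F))
    (β γ : ℕ → ℝ)
    (hβnonneg : ∀ k, 0 ≤ β k) (hβlt : ∀ k, β k < 1)
    (hβmono : ∀ k, β (k + 1) ≤ β k)
    (hγ : ∀ k, γ k = 2 * (1 - β k) * c / L)
    (prox : ℝ → EuclideanSpace ℝ (Fin n) → EuclideanSpace ℝ (Fin n))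
    (hprox : ∀ (γ' : ℝ) (y : EuclideanSpace ℝ (Fin n)), 0 < γ' →
      IsMinOn (fun z => ‖z - y‖ ^ 2 / (2 * γ') + g z) Set.univ (prox γ' y))
    (x : ℤ → EuclideanSpace ℝ (Fin n))
    (hiter : ∀ k : ℕ,
      x (k + 1) = prox (γ k) (x k - γ k • f' (x k) + β k • (x k - x ((k : ℤ) - 1))))
    -- `argmin F` is nonempty; `F xstar = min F`
    (xstar : EuclideanSpace ℝ (Fin n)) (hxstar : ∀ y, F xstar ≤ F y)
    -- `xbar k` is the metric projection of `x k` onto `argmin F`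
    (xbar : ℕ → EuclideanSpace ℝ (Fin n))
    (hxbar_mem : ∀ k, ∀ y, F (xbar k) ≤ F y)
    (hxbar_proj : ∀ k : ℕ, ∀ y, (∀ z, F y ≤ F z) → ‖x k - xbar k‖ ≤ ‖x k - y‖)
    (δ ξ ε : ℕ → ℝ)
    (hδ : ∀ k, δ k = (1 / γ k - L / 2) / 2)
    (hξ : ∀ k, ξ k = F (x k) + δ k * ‖x k - x ((k : ℤ) - 1)‖ ^ 2 - F xstar)
    (hε : ∀ k, ε k = 4 * c * (δ (k + 1)) ^ 2 / ((1 - c) * L) + 4 * c / ((1 - c) * L * (γ k) ^ 2)) :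
    ∀ k : ℕ,
      (ξ (k + 1)) ^ 2
        ≤ ε k * (ξ k - ξ (k + 1))
          * (2 * ‖x (k + 1) - xbar (k + 1)‖ ^ 2 + ‖x (k + 1) - x k‖ ^ 2) := by
  intro k
  have hLne : L ≠ 0 := ne_of_gt hL
  have hcne : c ≠ 0 := ne_of_gt hc0
  have h1cpos : (0:ℝ) < 1 - c := by linarith
  have h1cne : (1:ℝ) - c ≠ 0 := ne_of_gt h1cpos
  have hbne : (1:ℝ) - β k ≠ 0 := ne_of_gt (by linarith [hβlt k])
  have hβk0 := hβnonneg k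
  have hβk1 := hβlt k
  -- positivity of stepsizes
  have hγpos : ∀ j, 0 < γ j := by
    intro j
    rw [hγ j]
    apply div_pos _ hL
    nlinarith [hβlt j, hβnonneg j]
  have hγkne : γ k ≠ 0 := ne_of_gt (hγpos k)
  -- positivity of δ
  have hδpos : ∀ j, 0 < δ j := by
    intro j
    have hu0 : 0 < (1 - β j) * c := by nlinarith [hβlt j]
    have hu1 : (1 - β j) * c < 1 := by nlinarith [hβnonneg j]
    rw [hδ j, hγ j]
    have e : 1 / (2 * (1 - β j) * c / L) = L / (2 * (1 - β j) * c) := one_div_div _ _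
    rw [e]
    have h2 : L / 2 < L / (2 * (1 - β j) * c) := by
      apply div_lt_div_of_pos_left hL (by nlinarith) (by nlinarith)
    linarith
  -- δ is non-increasing
  have hδle : δ (k + 1) ≤ δ k := by
    rw [hδ k, hδ (k + 1)]
    have hγle : γ k ≤ γ (k + 1) := by
      rw [hγ k, hγ (k + 1)]
      have h2 : 2 * (1 - β k) * c ≤ 2 * (1 - β (k + 1)) * c := by nlinarith [hβmono k]
      exact (div_le_div_iff_of_pos_right hL).mpr h2
    have := one_div_le_one_div_of_le (hγpos k) hγle
    linarith
  -- normalize casts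
  have hξk := hξ k
  have hξk1 := hξ (k + 1)
  simp only [Nat.cast_add, Nat.cast_one, add_sub_cancel_right] at hξk1 ⊢
  set a := x (k : ℤ) with ha
  set b := x ((k : ℤ) + 1) with hb
  set d := x ((k : ℤ) - 1) with hd
  set xb := xbar (k + 1) with hxbdef
  set y := a - γ k • f' a + β k • (a - d) with hy
  set r := 1 / γ k with hr
  have hrpos : 0 < r := by rw [hr]; exact one_div_pos.mpr (hγpos k)
  have hrγ : r * γ k = 1 := by rw [hr]; field_simp
  have h2rL : L < 2 * r := by
    have h := hδpos k
    rw [hδ k, ← hr] at h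
    linarith
  -- the prox step
  have hbprox : b = prox (γ k) y := hiter k
  have hmin : IsMinOn (fun z => ‖z - y‖ ^ 2 / (2 * γ k) + g z) Set.univ b := by
    rw [hbprox]; exact hprox _ _ (hγpos k)
  have hPa := pigd_prox_subgrad g hgconv (γ k) (hγpos k) y b hmin a
  have hPxb := pigd_prox_subgrad g hgconv (γ k) (hγpos k) y b hmin xb
  have hdesc := pigd_descent f f' L hL hf' hlip a b
  have hgrad := pigd_grad_ineq f f' hfconv hf' b xb
  have hcoco := pigd_coco f f' L hL hfconv hf' hlip a b
  rw [← hr] at hPa hPxb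
  -- vector identity for y - b
  have hyb : y - b = -(b - a) - γ k • f' a + β k • (a - d) := by rw [hy]; abel
  have hyb' : y - b = (a - b) - γ k • f' a + β k • (a - d) := by rw [hy]; abel
  -- Inequality I (sufficient decrease)
  have hexp1 : ⟪y - b, a - b⟫ = ‖b - a‖ ^ 2 + γ k * ⟪f' a, b - a⟫ - β k * ⟪a - d, b - a⟫ := by
    rw [hyb', inner_add_left, inner_sub_left, real_inner_smul_left, real_inner_smul_left,
      real_inner_self_eq_norm_sq]
    have c1 : ‖a - b‖ = ‖b - a‖ := norm_sub_rev _ _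
    have c2 : ⟪f' a, a - b⟫ = -⟪f' a, b - a⟫ := by
      rw [show a - b = -(b - a) from by abel, inner_neg_right]
    have c3 : ⟪a - d, a - b⟫ = -⟪a - d, b - a⟫ := by
      rw [show a - b = -(b - a) from by abel, inner_neg_right]
    rw [c1, c2, c3]
    ring
  have hI : F b ≤ F a - (2 * δ k) * ‖b - a‖ ^ 2 + (β k * r) * ⟪a - d, b - a⟫ := by
    rw [hexp1] at hPa
    have e1 : r * (‖b - a‖ ^ 2 + γ k * ⟪f' a, b - a⟫ - β k * ⟪a - d, b - a⟫)
        = r * ‖b - a‖ ^ 2 + ⟪f' a, b - a⟫ - (β k * r) * ⟪a - d, b - a⟫ := by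
      linear_combination (⟪f' a, b - a⟫ : ℝ) * hrγ
    rw [e1] at hPa
    have e2 : 2 * δ k = r - L / 2 := by rw [hδ k, ← hr]; ring
    have e2' : (2 * δ k) * ‖b - a‖ ^ 2 = (r - L / 2) * ‖b - a‖ ^ 2 := by rw [e2]
    rw [hF a, hF b]
    linarith [hPa, hdesc, e2']
  -- Inequality II (subgradient bound)
  have hsum : F b + ⟪f' b + r • (y - b), xb - b⟫ ≤ F xb := by
    rw [inner_add_left, real_inner_smul_left, hF b, hF xb]
    linarith [hPxb, hgrad]
  have hFxb : F xb = F xstar := le_antisymm (hxbar_mem (k + 1) xstar) (hxstar xb)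
  have hu : f' b + r • (y - b)
      = (f' b - f' a - r • (b - a)) + (β k * r) • (a - d) := by
    rw [hyb, smul_add, smul_sub, smul_neg, smul_smul, smul_smul, hrγ, one_smul,
      mul_comm r (β k)]
    abel
  have hnormu : ‖f' b + r • (y - b)‖ ≤ r * (‖b - a‖ + β k * ‖a - d‖) := by
    rw [hu]
    have hipnn : 0 ≤ ⟪f' b - f' a, b - a⟫ := le_trans (by positivity) hcoco
    have eL : L * (1 / L * ‖f' b - f' a‖ ^ 2) = ‖f' b - f' a‖ ^ 2 := by field_simp
    have hQ : ‖f' b - f' a‖ ^ 2 ≤ L * ⟪f' b - f' a, b - a⟫ := by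
      have h := mul_le_mul_of_nonneg_left hcoco hL.le
      rw [eL] at h
      exact h
    have hstep : L * ⟪f' b - f' a, b - a⟫ ≤ 2 * r * ⟪f' b - f' a, b - a⟫ :=
      mul_le_mul_of_nonneg_right (by linarith) hipnn
    have h1 : ‖f' b - f' a - r • (b - a)‖ ≤ r * ‖b - a‖ := by
      have hsq : ‖f' b - f' a - r • (b - a)‖ ^ 2 ≤ (r * ‖b - a‖) ^ 2 := by
        rw [norm_sub_sq_real, real_inner_smul_right, norm_smul, Real.norm_eq_abs,
          abs_of_pos hrpos]
        linarith [hQ, hstep]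
      nlinarith [hsq, norm_nonneg (f' b - f' a - r • (b - a)),
        mul_nonneg hrpos.le (norm_nonneg (b - a))]
    have h2 : ‖(β k * r) • (a - d)‖ = β k * r * ‖a - d‖ := by
      rw [norm_smul, Real.norm_eq_abs, abs_of_nonneg (by positivity)]
    calc ‖(f' b - f' a - r • (b - a)) + (β k * r) • (a - d)‖
        ≤ ‖f' b - f' a - r • (b - a)‖ + ‖(β k * r) • (a - d)‖ := norm_add_le _ _
      _ ≤ r * ‖b - a‖ + β k * r * ‖a - d‖ := by rw [h2]; linarith
      _ = r * (‖b - a‖ + β k * ‖a - d‖) := by ring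
  have hFb : F b - F xstar ≤ r * (‖b - a‖ + β k * ‖a - d‖) * ‖b - xb‖ := by
    have e3 : ⟪f' b + r • (y - b), xb - b⟫ = -⟪f' b + r • (y - b), b - xb⟫ := by
      rw [show xb - b = -(b - xb) from by abel, inner_neg_right]
    rw [e3, hFxb] at hsum
    have hcs := real_inner_le_norm (f' b + r • (y - b)) (b - xb)
    have h4 := mul_le_mul_of_nonneg_right hnormu (norm_nonneg (b - xb))
    linarith
  -- scalar abbreviations
  set A := ‖b - a‖ with hA
  set B := ‖a - d‖ with hB
  set P := ‖b - xb‖ with hP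
  have hA0 : 0 ≤ A := norm_nonneg _
  have hB0 : 0 ≤ B := norm_nonneg _
  have hP0 : 0 ≤ P := norm_nonneg _
  set m := L * (1 - c) / (4 * c) with hm
  have hmpos : 0 < m := by
    rw [hm]
    have : 0 < 1 - c := by linarith
    positivity
  have hm1 : δ k - β k * r / 2 = m := by
    have hγL : γ k * L = 2 * (1 - β k) * c := by rw [hγ k]; field_simp
    have hrval : r * (1 - β k) = L / (2 * c) := by
      rw [eq_div_iff (by positivity : (2:ℝ) * c ≠ 0)]
      linear_combination (-r) * hγL + L * hrγ
    rw [hδ k, ← hr, hm]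
    linear_combination hrval / 2 + (L / 4) * (mul_inv_cancel₀ hcne)
  have hεm : ε k * m = δ (k + 1) ^ 2 + r ^ 2 := by
    rw [hε k, hm, hr]
    field_simp [hcne, hLne, h1cne, hγkne]
  -- decrease bound
  have hD : m * (A ^ 2 + B ^ 2) ≤ ξ k - ξ (k + 1) := by
    rw [hξk, hξk1]
    have hip : ⟪a - d, b - a⟫ ≤ B * A := real_inner_le_norm (a - d) (b - a)
    have hipc : (β k * r) * ⟪a - d, b - a⟫ ≤ (β k * r) * ((A ^ 2 + B ^ 2) / 2) := by
      apply mul_le_mul_of_nonneg_left _ (by positivity)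
      nlinarith [sq_nonneg (A - B), hip]
    have hc1'' : m ≤ 2 * δ k - δ (k + 1) - β k * r / 2 := by linarith [hδle, hm1]
    have hA2 : m * A ^ 2 ≤ (2 * δ k - δ (k + 1) - β k * r / 2) * A ^ 2 :=
      mul_le_mul_of_nonneg_right hc1'' (sq_nonneg A)
    have hB2 : m * B ^ 2 = (δ k - β k * r / 2) * B ^ 2 := by rw [hm1]
    linarith [hI, hipc, hA2, hB2]
  -- upper bound for ξ (k+1)
  have hbound : ξ (k + 1) ≤ r * (A + β k * B) * P + δ (k + 1) * A ^ 2 := by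
    rw [hξk1]
    linarith [hFb]
  have hξnn : 0 ≤ ξ (k + 1) := by
    rw [hξk1]
    have h5 := hxstar b
    have h6 : 0 ≤ δ (k + 1) * A ^ 2 := mul_nonneg (hδpos (k + 1)).le (sq_nonneg A)
    linarith
  -- final algebra
  have hεnn : 0 ≤ ε k :=
    pigd_alg0 (ε k) m (δ (k + 1) ^ 2 + r ^ 2) hεm hmpos (by positivity)
  have t1 : ξ (k + 1) ^ 2 ≤ (r * (A + β k * B) * P + δ (k + 1) * A ^ 2) ^ 2 :=
    pow_le_pow_left₀ hξnn hbound 2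
  have t2 : (r * (A + β k * B) * P + δ (k + 1) * A ^ 2) ^ 2
      ≤ ((r * (A + β k * B)) ^ 2 / 2 + δ (k + 1) ^ 2 * A ^ 2) * (2 * P ^ 2 + A ^ 2) :=
    pigd_alg1 (r * (A + β k * B)) (δ (k + 1)) A P
  have t3 : (r * (A + β k * B)) ^ 2 / 2 + δ (k + 1) ^ 2 * A ^ 2
      ≤ (δ (k + 1) ^ 2 + r ^ 2) * (A ^ 2 + B ^ 2) :=
    pigd_alg2 A B (β k) r (δ (k + 1)) hβk0 (le_of_lt hβk1) hB0
  have t4 : (δ (k + 1) ^ 2 + r ^ 2) * (A ^ 2 + B ^ 2) ≤ ε k * (ξ k - ξ (k + 1)) := by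
    calc (δ (k + 1) ^ 2 + r ^ 2) * (A ^ 2 + B ^ 2) = ε k * (m * (A ^ 2 + B ^ 2)) := by
          rw [← hεm]; ring
      _ ≤ ε k * (ξ k - ξ (k + 1)) := mul_le_mul_of_nonneg_left hD hεnn
  have hfac : (0:ℝ) ≤ 2 * P ^ 2 + A ^ 2 := by positivity
  calc ξ (k + 1) ^ 2
      ≤ ((r * (A + β k * B)) ^ 2 / 2 + δ (k + 1) ^ 2 * A ^ 2) * (2 * P ^ 2 + A ^ 2) :=
        le_trans t1 t2
    _ ≤ ((δ (k + 1) ^ 2 + r ^ 2) * (A ^ 2 + B ^ 2)) * (2 * P ^ 2 + A ^ 2) :=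
        mul_le_mul_of_nonneg_right t3 hfac
    _ ≤ (ε k * (ξ k - ξ (k + 1))) * (2 * P ^ 2 + A ^ 2) :=
        mul_le_mul_of_nonneg_right t4 hfac
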